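/- Let α be a well order. If s ≤_w t_l * t_r, then s can be split as s = s_l * s_r with s_l ≤_w t_l and s_r ≤_w t_r; moreover if s ≤_s t_l * t_r then one can choose the splitting so that s_l ≤_s t_l and s_r ≤_s t_r. -/

import Mathlib

/-- The weak gap condition on finite sequences over a linear order. -/
def WeakGap {α : Type*} [LinearOrder α] (s t : List α) : Prop :=
  ∃ f : Fin s.length → Fin t.length,
    StrictMono f ∧
    (∀ i, s.get i ≤ t.get (f i)) ∧
    ∀ (i : ℕ) (h : i + 1 < s.length) (j : Fin t.length),
      f ⟨i, Nat.lt_of_succ_lt h⟩ < j → j < f ⟨i + 1, h⟩ → s.get ⟨i + 1, h⟩ ≤ t.get j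

/-- The strong gap condition on finite sequences over a linear order:
as the weak one, but additionally respecting the outer gap. -/
def StrongGap {α : Type*} [LinearOrder α] (s t : List α) : Prop :=
  ∃ f : Fin s.length → Fin t.length,
    StrictMono f ∧
    (∀ i, s.get i ≤ t.get (f i)) ∧
    (∀ (i : ℕ) (h : i + 1 < s.length) (j : Fin t.length),
      f ⟨i, Nat.lt_of_succ_lt h⟩ < j → j < f ⟨i + 1, h⟩ → s.get ⟨i + 1, h⟩ ≤ t.get j) ∧
    ∀ (h : 0 < s.length) (j : Fin t.length), j < f ⟨0, h⟩ → s.get ⟨0, h⟩ ≤ t.get j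

lemma gap_split_aux {α : Type*} [LinearOrder α]
    (s tl tr : List α) (f : Fin s.length → Fin (tl ++ tr).length)
    (hmono : StrictMono f)
    (hle : ∀ i, s.get i ≤ (tl ++ tr).get (f i))
    (hgap : ∀ (i : ℕ) (h : i + 1 < s.length) (j : Fin (tl ++ tr).length),
      f ⟨i, Nat.lt_of_succ_lt h⟩ < j → j < f ⟨i + 1, h⟩ →
        s.get ⟨i + 1, h⟩ ≤ (tl ++ tr).get j) :
    ∃ sl sr, s = sl ++ sr ∧ WeakGap sl tl ∧ WeakGap sr tr ∧
      ((∀ (h : 0 < s.length) (j : Fin (tl ++ tr).length), j < f ⟨0, h⟩ →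
          s.get ⟨0, h⟩ ≤ (tl ++ tr).get j) → StrongGap sl tl ∧ StrongGap sr tr) := by
  classical
  have hlen : (tl ++ tr).length = tl.length + tr.length := List.length_append
  set P : ℕ → Prop := fun i => ∀ h : i < s.length, tl.length ≤ (f ⟨i, h⟩ : ℕ) with hP
  have hPex : ∃ i, P i := ⟨s.length, fun h => absurd h (lt_irrefl _)⟩
  set k : ℕ := Nat.find hPex with hkdef
  have hkn : k ≤ s.length := Nat.find_le (fun h => absurd h (lt_irrefl _))
  have hklt : ∀ (i : ℕ) (h : i < s.length), i < k → (f ⟨i, h⟩ : ℕ) < tl.length := by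
    intro i h hi
    have := Nat.find_min hPex hi
    simp only [hP, not_forall, not_le] at this
    obtain ⟨h', hx⟩ := this
    exact hx
  have hkge : ∀ (i : ℕ) (h : i < s.length), k ≤ i → tl.length ≤ (f ⟨i, h⟩ : ℕ) := by
    intro i h hi
    have hk : k < s.length := lt_of_le_of_lt hi h
    have h1 : tl.length ≤ (f ⟨k, hk⟩ : ℕ) := Nat.find_spec hPex hk
    have h2 : f ⟨k, hk⟩ ≤ f ⟨i, h⟩ := hmono.monotone (by simp [Fin.mk_le_mk, hi])
    exact le_trans h1 h2
  clear_value k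
  have hsl : (s.take k).length = k := by simp [List.length_take, hkn]
  have hsr : (s.drop k).length = s.length - k := List.length_drop
  -- the left map
  have hfl1 : ∀ i : Fin (s.take k).length, (i : ℕ) < s.length := fun i => by
    have := i.2; omega
  let fl : Fin (s.take k).length → Fin tl.length := fun i =>
    ⟨(f ⟨i, hfl1 i⟩ : ℕ), hklt _ _ (by have := i.2; omega)⟩
  have hml : StrictMono fl := by
    intro a b hab
    simp only [fl, Fin.lt_def]
    exact hmono (show (⟨a, hfl1 a⟩ : Fin s.length) < ⟨b, hfl1 b⟩ from hab)
  have hlel : ∀ i, (s.take k).get i ≤ tl.get (fl i) := by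
    intro i
    have := hle ⟨i, hfl1 i⟩
    simp only [List.get_eq_getElem] at this ⊢
    rw [List.getElem_take]
    rw [List.getElem_append_left (hklt _ _ (by have := i.2; omega))] at this
    exact this
  have hgl : ∀ (i : ℕ) (h : i + 1 < (s.take k).length) (j : Fin tl.length),
      fl ⟨i, Nat.lt_of_succ_lt h⟩ < j → j < fl ⟨i + 1, h⟩ →
        (s.take k).get ⟨i + 1, h⟩ ≤ tl.get j := by
    intro i h j hj1 hj2
    have hi1 : i + 1 < s.length := by omega
    have hjlt : (j : ℕ) < (tl ++ tr).length := by have := j.2; omega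
    have := hgap i hi1 ⟨j, hjlt⟩ (by simpa [fl, Fin.lt_def] using hj1)
      (by simpa [fl, Fin.lt_def] using hj2)
    simp only [List.get_eq_getElem] at this ⊢
    rw [List.getElem_take]
    rw [List.getElem_append_left j.2] at this
    exact this
  -- the right map
  have hfr1 : ∀ i : Fin (s.drop k).length, k + (i : ℕ) < s.length := fun i => by
    have := i.2; omega
  have hfr2 : ∀ i : Fin (s.drop k).length,
      (f ⟨k + i, hfr1 i⟩ : ℕ) - tl.length < tr.length := by
    intro i
    have h1 := (f ⟨k + i, hfr1 i⟩).2
    have h2 := hkge (k + i) (hfr1 i) (by omega)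
    omega
  let fr : Fin (s.drop k).length → Fin tr.length := fun i =>
    ⟨(f ⟨k + i, hfr1 i⟩ : ℕ) - tl.length, hfr2 i⟩
  have hmr : StrictMono fr := by
    intro a b hab
    simp only [fr, Fin.lt_def]
    have hab' : (a : ℕ) < b := hab
    have h1 : f ⟨k + a, hfr1 a⟩ < f ⟨k + b, hfr1 b⟩ :=
      hmono (Fin.mk_lt_mk.mpr (Nat.add_lt_add_left hab' k))
    have h2 := hkge (k + a) (hfr1 a) (by omega)
    have h3 := hkge (k + b) (hfr1 b) (by omega)
    simp only [Fin.lt_def] at h1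
    omega
  have hler : ∀ i, (s.drop k).get i ≤ tr.get (fr i) := by
    intro i
    have := hle ⟨k + i, hfr1 i⟩
    simp only [List.get_eq_getElem] at this ⊢
    rw [List.getElem_drop]
    rw [List.getElem_append_right (hkge (k + i) (hfr1 i) (by omega))] at this
    exact this
  have hgr : ∀ (i : ℕ) (h : i + 1 < (s.drop k).length) (j : Fin tr.length),
      fr ⟨i, Nat.lt_of_succ_lt h⟩ < j → j < fr ⟨i + 1, h⟩ →
        (s.drop k).get ⟨i + 1, h⟩ ≤ tr.get j := by
    intro i h j hj1 hj2
    have hi1 : (k + i) + 1 < s.length := by omega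
    have hjlt : tl.length + (j : ℕ) < (tl ++ tr).length := by have := j.2; omega
    simp only [fr, Fin.lt_def] at hj1 hj2
    have hA : tl.length ≤ (f ⟨k + i, hfr1 ⟨i, Nat.lt_of_succ_lt h⟩⟩ : ℕ) :=
      hkge (k + i) (hfr1 ⟨i, Nat.lt_of_succ_lt h⟩) (by omega)
    have hB : tl.length ≤ (f ⟨k + i + 1, hi1⟩ : ℕ) := hkge (k + i + 1) hi1 (by omega)
    have hj2' : (j : ℕ) < (f ⟨k + i + 1, hi1⟩ : ℕ) - tl.length := hj2
    have := hgap (k + i) hi1 ⟨tl.length + j, hjlt⟩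
      (by simp only [Fin.lt_def]; omega) (by simp only [Fin.lt_def]; omega)
    simp only [List.get_eq_getElem] at this ⊢
    rw [List.getElem_drop]
    rw [List.getElem_append_right (by omega : tl.length ≤ tl.length + (j : ℕ))] at this
    simpa [Nat.add_assoc] using this
  refine ⟨s.take k, s.drop k, (List.take_append_drop k s).symm,
    ⟨fl, hml, hlel, hgl⟩, ⟨fr, hmr, hler, hgr⟩, fun houter => ?_⟩
  constructor
  · refine ⟨fl, hml, hlel, hgl, ?_⟩
    intro h0 j hj
    have h0' : 0 < s.length := by omega
    have := houter h0' ⟨j, by have := j.2; omega⟩ (by simpa [fl, Fin.lt_def] using hj)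
    simp only [List.get_eq_getElem] at this ⊢
    rw [List.getElem_take]
    rw [List.getElem_append_left j.2] at this
    exact this
  · refine ⟨fr, hmr, hler, hgr, ?_⟩
    intro h0 j hj
    have hjlt : tl.length + (j : ℕ) < (tl ++ tr).length := by have := j.2; omega
    simp only [fr, Fin.lt_def] at hj
    have hA := hkge (k + 0) (hfr1 ⟨0, h0⟩) (by omega)
    have key : s.get ⟨k + 0, hfr1 ⟨0, h0⟩⟩ ≤ (tl ++ tr).get ⟨tl.length + j, hjlt⟩ := by
      rcases Nat.eq_zero_or_pos k with rfl | hkpos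
      · have h0' : 0 < s.length := by omega
        have hj' : (j : ℕ) < (f ⟨0, h0'⟩ : ℕ) - tl.length := hj
        have hA' : tl.length ≤ (f ⟨0, h0'⟩ : ℕ) := hA
        exact houter h0' ⟨tl.length + j, hjlt⟩ (by simp only [Fin.lt_def]; omega)
      · obtain ⟨k', rfl⟩ : ∃ k', k = k' + 1 := ⟨k - 1, by omega⟩
        have hh : k' + 1 < s.length := by omega
        have hflt : (f ⟨k', Nat.lt_of_succ_lt hh⟩ : ℕ) < tl.length :=
          hklt k' (Nat.lt_of_succ_lt hh) (by omega)
        have hj' : (j : ℕ) < (f ⟨k' + 1, hh⟩ : ℕ) - tl.length := hj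
        have hA' : tl.length ≤ (f ⟨k' + 1, hh⟩ : ℕ) := hA
        exact hgap k' hh ⟨tl.length + j, hjlt⟩
          (by simp only [Fin.lt_def]; omega) (by simp only [Fin.lt_def]; omega)
    simp only [List.get_eq_getElem] at key ⊢
    rw [List.getElem_drop]
    rw [List.getElem_append_right (by omega : tl.length ≤ tl.length + (j : ℕ))] at key
    simpa using key

/-- Splitting a gap relation along a concatenation of the right-hand side. -/
theorem gap_split {α : Type*} [LinearOrder α] [WellFoundedLT α]
    (s tl tr : List α) :
    (WeakGap s (tl ++ tr) →
      ∃ sl sr, s = sl ++ sr ∧ WeakGap sl tl ∧ WeakGap sr tr) ∧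
    (StrongGap s (tl ++ tr) →
      ∃ sl sr, s = sl ++ sr ∧ StrongGap sl tl ∧ StrongGap sr tr) := by
  constructor
  · rintro ⟨f, hmono, hle, hgap⟩
    obtain ⟨sl, sr, heq, hwl, hwr, -⟩ := gap_split_aux s tl tr f hmono hle hgap
    exact ⟨sl, sr, heq, hwl, hwr⟩
  · rintro ⟨f, hmono, hle, hgap, houter⟩
    obtain ⟨sl, sr, heq, -, -, hstrong⟩ := gap_split_aux s tl tr f hmono hle hgap
    obtain ⟨hsl, hsr⟩ := hstrong houter
    exact ⟨sl, sr, heq, hsl, hsr⟩
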